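/- Let m ≥ 2 and n ≥ 1, let f : E^m → E^n be a function such that 0 is a limit point of the set P_f of distances preserved by f, and let l ∈ P_f. Then f maps each segment of length l isometrically: for all x, y ∈ E^m with d(x, y) = l and all s, t ∈ [0, 1], one has d(f((1−s)·x + s·y), f((1−t)·x + t·y)) = |s − t| · l. -/

import Mathlib

open EuclideanSpace
open scoped RealInnerProductSpace

-- existence of a point at distance r from both x and y, when dist x y ≤ 2r
lemma exists_two_step (m : ℕ) (hm : 2 ≤ m) (x y : EuclideanSpace ℝ (Fin m))
    (r : ℝ) (hr : 0 < r) (hd : dist x y ≤ 2 * r) :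
    ∃ z, dist x z = r ∧ dist z y = r := by
  set v : EuclideanSpace ℝ (Fin m) := y - x with hv
  -- find a unit vector orthogonal to v
  have hne : ((ℝ ∙ v)ᗮ : Submodule ℝ (EuclideanSpace ℝ (Fin m))) ≠ ⊥ := by
    intro hbot
    have h1 := Submodule.finrank_add_finrank_orthogonal (K := (ℝ ∙ v))
    rw [hbot, finrank_bot] at h1
    have h2 : Module.finrank ℝ (ℝ ∙ v) ≤ 1 := by
      rcases eq_or_ne v 0 with h | h
      · rw [h, Submodule.span_zero_singleton]; simp
      · rw [finrank_span_singleton h]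
    have h3 : Module.finrank ℝ (EuclideanSpace ℝ (Fin m)) = m :=
      finrank_euclideanSpace_fin
    omega
  obtain ⟨w0, hw0mem, hw0ne⟩ := Submodule.exists_mem_ne_zero_of_ne_bot hne
  set w : EuclideanSpace ℝ (Fin m) := ‖w0‖⁻¹ • w0 with hw
  have hwnorm : ‖w‖ = 1 := by
    rw [hw, norm_smul, norm_inv, norm_norm]
    field_simp [norm_ne_zero_iff.mpr hw0ne]
  have hworth : ⟪v, w⟫ = 0 := by
    have h1 : ⟪v, w0⟫ = 0 := hw0mem v (Submodule.mem_span_singleton_self v)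
    rw [hw, inner_smul_right, h1, mul_zero]
  set d : ℝ := dist x y with hdd
  have hd0 : 0 ≤ d := dist_nonneg
  have hsq : 0 ≤ r ^ 2 - (d / 2) ^ 2 := by nlinarith
  set h : ℝ := Real.sqrt (r ^ 2 - (d / 2) ^ 2) with hh
  have hh2 : h ^ 2 = r ^ 2 - (d / 2) ^ 2 := Real.sq_sqrt hsq
  refine ⟨x + (1 / 2 : ℝ) • v + h • w, ?_, ?_⟩
  · have : x + (1 / 2 : ℝ) • v + h • w - x = (1 / 2 : ℝ) • v + h • w := by abel
    rw [dist_eq_norm', this]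
    have hnormsq : ‖(1 / 2 : ℝ) • v + h • w‖ ^ 2 = r ^ 2 := by
      rw [norm_add_sq_real, inner_smul_left, inner_smul_right, hworth, norm_smul,
        norm_smul, hwnorm]
      have hvnorm : ‖v‖ = d := by rw [hv, hdd, dist_eq_norm']
      rw [hvnorm]
      simp only [starRingEnd_apply, star_trivial, mul_zero, add_zero, mul_one,
        mul_pow, sq_abs, Real.norm_eq_abs]
      rw [hh2]; ring
    nlinarith [norm_nonneg ((1 / 2 : ℝ) • v + h • w), hnormsq]
  · have hy : y = x + v := by rw [hv]; abel
    have : y - (x + (1 / 2 : ℝ) • v + h • w) = (1 / 2 : ℝ) • v - h • w := by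
      rw [hy]; module
    rw [dist_eq_norm', this]
    have hnormsq : ‖(1 / 2 : ℝ) • v - h • w‖ ^ 2 = r ^ 2 := by
      rw [norm_sub_sq_real, inner_smul_left, inner_smul_right, hworth, norm_smul,
        norm_smul, hwnorm]
      have hvnorm : ‖v‖ = d := by rw [hv, hdd, dist_eq_norm']
      rw [hvnorm]
      simp only [starRingEnd_apply, star_trivial, mul_zero, sub_zero, mul_one,
        mul_pow, sq_abs, Real.norm_eq_abs]
      rw [hh2]; ring
    nlinarith [norm_nonneg ((1 / 2 : ℝ) • v - h • w), hnormsq]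

theorem stmt_4 (m n : ℕ) (hm : 2 ≤ m) (hn : 1 ≤ n)
    (f : EuclideanSpace ℝ (Fin m) → EuclideanSpace ℝ (Fin n))
    (hlim : ∀ ε > 0, ∃ r, 0 < r ∧ r < ε ∧
      ∀ x y, dist x y = r → dist (f x) (f y) = r)
    (l : ℝ) (hl : 0 < l)
    (hpl : ∀ x y, dist x y = l → dist (f x) (f y) = l) :
    ∀ x y, dist x y = l → ∀ s ∈ Set.Icc (0:ℝ) 1, ∀ t ∈ Set.Icc (0:ℝ) 1,
      dist (f ((1 - s) • x + s • y)) (f ((1 - t) • x + t • y)) = |s - t| * l := by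
  -- f is nonexpansive
  have key : ∀ r > 0, (∀ x y, dist x y = r → dist (f x) (f y) = r) →
      ∀ k : ℕ, ∀ x y : EuclideanSpace ℝ (Fin m), dist x y ≤ 2 * k * r →
        dist (f x) (f y) ≤ 2 * k * r := by
    intro r hr hpr k
    induction k with
    | zero =>
      intro x y hxy
      simp only [Nat.cast_zero, mul_zero, zero_mul] at hxy ⊢
      have : dist x y = 0 := le_antisymm hxy dist_nonneg
      rw [dist_eq_zero] at this
      simp [this]
    | succ k ih =>
      intro x y hxy
      by_cases hle : dist x y ≤ 2 * r
      · obtain ⟨z, hz1, hz2⟩ := exists_two_step m hm x y r hr hle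
        have h1 := hpr x z hz1
        have h2 := hpr z y hz2
        calc dist (f x) (f y) ≤ dist (f x) (f z) + dist (f z) (f y) := dist_triangle _ _ _
          _ = 2 * r := by rw [h1, h2]; ring
          _ ≤ 2 * (k + 1 : ℕ) * r := by
            have : (1 : ℝ) ≤ (k + 1 : ℕ) := by exact_mod_cast Nat.one_le_iff_ne_zero.mpr (by omega)
            nlinarith
      · push_neg at hle
        set d : ℝ := dist x y with hdd
        have hd0 : 0 < d := lt_trans (by positivity) hle
        set u : EuclideanSpace ℝ (Fin m) := x + (2 * r / d) • (y - x) with hu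
        have hxu : dist x u = 2 * r := by
          rw [hu, dist_eq_norm']
          have : x + (2 * r / d) • (y - x) - x = (2 * r / d) • (y - x) := by abel
          rw [this, norm_smul, Real.norm_eq_abs]
          have : ‖y - x‖ = d := by rw [hdd, dist_eq_norm']
          rw [this, abs_of_nonneg (by positivity)]
          field_simp
        have huy : dist u y = d - 2 * r := by
          rw [hu, dist_eq_norm]
          have he : x + (2 * r / d) • (y - x) - y = (2 * r / d - 1) • (y - x) := by
            rw [sub_smul, one_smul]; module
          rw [he, norm_smul, Real.norm_eq_abs]
          have : ‖y - x‖ = d := by rw [hdd, dist_eq_norm']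
          rw [this, abs_of_nonpos (by
            rw [sub_nonpos, div_le_one hd0]; linarith)]
          field_simp
          ring
        obtain ⟨z, hz1, hz2⟩ := exists_two_step m hm x u r hr (le_of_eq hxu)
        have h1 := hpr x z hz1
        have h2 := hpr z u hz2
        have h3 : dist (f u) (f y) ≤ 2 * k * r := by
          apply ih
          rw [huy]
          push_cast at hxy ⊢
          linarith
        calc dist (f x) (f y) ≤ dist (f x) (f z) + dist (f z) (f u) + dist (f u) (f y) :=
              dist_triangle4 _ _ _ _
          _ ≤ r + r + 2 * k * r := by rw [h1, h2]; linarith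
          _ = 2 * (k + 1 : ℕ) * r := by push_cast; ring
  have nonexp : ∀ x y : EuclideanSpace ℝ (Fin m), dist (f x) (f y) ≤ dist x y := by
    intro x y
    apply le_of_forall_pos_le_add
    intro ε hε
    obtain ⟨r, hr, hrε, hpr⟩ := hlim (ε / 2) (by positivity)
    set k : ℕ := ⌈dist x y / (2 * r)⌉₊ with hk
    have hd0 : (0:ℝ) ≤ dist x y := dist_nonneg
    have hk1 : dist x y / (2 * r) ≤ k := Nat.le_ceil _
    have hk2 : (k : ℝ) < dist x y / (2 * r) + 1 :=
      Nat.ceil_lt_add_one (by positivity)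
    have hle : dist x y ≤ 2 * k * r := by
      rw [div_le_iff₀ (by positivity)] at hk1; linarith
    have := key r hr hpr k x y hle
    have h3 := mul_lt_mul_of_pos_right hk2 (show (0:ℝ) < 2 * r by positivity)
    rw [add_mul, div_mul_cancel₀ _ (show (2:ℝ) * r ≠ 0 by positivity)] at h3
    linarith
  -- distance along the segment
  intro x y hxy
  have seg : ∀ s t : ℝ, dist ((1 - s) • x + s • y) ((1 - t) • x + t • y) = |s - t| * l := by
    intro s t
    rw [dist_eq_norm]
    have he : (1 - s) • x + s • y - ((1 - t) • x + t • y) = (t - s) • (x - y) := by module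
    rw [he, norm_smul, Real.norm_eq_abs,
      show ‖x - y‖ = l from by rw [← dist_eq_norm, hxy], abs_sub_comm]
  -- main claim for s ≤ t
  have main : ∀ s ∈ Set.Icc (0:ℝ) 1, ∀ t ∈ Set.Icc (0:ℝ) 1, s ≤ t →
      dist (f ((1 - s) • x + s • y)) (f ((1 - t) • x + t • y)) = (t - s) * l := by
    intro s hs t ht hst
    obtain ⟨hs0, hs1⟩ := hs
    obtain ⟨ht0, ht1⟩ := ht
    have hub : dist (f ((1 - s) • x + s • y)) (f ((1 - t) • x + t • y)) ≤ (t - s) * l := by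
      have := nonexp ((1 - s) • x + s • y) ((1 - t) • x + t • y)
      rw [seg s t, abs_sub_comm, abs_of_nonneg (by linarith)] at this
      exact this
    have h0s : dist (f x) (f ((1 - s) • x + s • y)) ≤ s * l := by
      have hd : dist x ((1 - s) • x + s • y) = s * l := by
        have := seg 0 s
        simpa [abs_of_nonneg hs0] using this
      calc dist (f x) (f ((1 - s) • x + s • y))
          ≤ dist x ((1 - s) • x + s • y) := nonexp _ _
        _ = s * l := hd
    have ht1' : dist (f ((1 - t) • x + t • y)) (f y) ≤ (1 - t) * l := by
      have hd : dist ((1 - t) • x + t • y) y = (1 - t) * l := by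
        have := seg t 1
        simpa [abs_of_nonpos (show t - 1 ≤ 0 by linarith)] using this
      calc dist (f ((1 - t) • x + t • y)) (f y)
          ≤ dist ((1 - t) • x + t • y) y := nonexp _ _
        _ = (1 - t) * l := hd
    have hfull : dist (f x) (f y) = l := hpl x y hxy
    have htri : dist (f x) (f y) ≤ dist (f x) (f ((1 - s) • x + s • y)) +
        dist (f ((1 - s) • x + s • y)) (f ((1 - t) • x + t • y)) +
        dist (f ((1 - t) • x + t • y)) (f y) := dist_triangle4 _ _ _ _
    have hlb : (t - s) * l ≤
        dist (f ((1 - s) • x + s • y)) (f ((1 - t) • x + t • y)) := by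
      rw [hfull] at htri
      nlinarith
    linarith
  intro s hs t ht
  rcases le_total s t with h | h
  · rw [main s hs t ht h, abs_sub_comm, abs_of_nonneg (by linarith)]
  · rw [dist_comm, main t ht s hs h, abs_of_nonneg (by linarith)]
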